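/- Dot product bound in a perfect system: let fl_1,…,fl_n and r_0,…,r_n round to nearest in a perfect system with unit roundoff u and 20nu ≤ 1. Define p_k = r_k(x_k y_k) and let d̂ be the recursively rounded sum of p_0,…,p_n. Then |d̂ − Σ_{k=0}^n x_k y_k| ≤ β_n u Σ_{k=0}^n |x_k y_k| ≤ (n+1)u Σ_{k=0}^n |x_k y_k|, where β_n = (n + 1 + 3nu)/(1 + (n+1)u + nu²). -/

import Mathlib

noncomputable section

/-- The set of positive normal floating point numbers with exponent `e`. -/
def Eset (β μ : ℕ) (e : ℤ) : Set ℝ :=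
  {x | ∃ r : ℕ, r < (β - 1) * β ^ μ ∧ x = (β : ℝ) ^ e * ((β : ℝ) ^ μ + r)}

/-- Perfect floating point system: all integer exponents. -/
def PerfectF (β μ : ℕ) : Set ℝ :=
  {x | x = 0 ∨ ∃ e : ℤ, x ∈ Eset β μ e ∨ -x ∈ Eset β μ e}

/-- MPFR system: exponents bounded below by `emin`, no subnormals. -/
def MPFRF (β μ : ℕ) (emin : ℤ) : Set ℝ :=
  {x | x = 0 ∨ ∃ e : ℤ, emin ≤ e ∧ (x ∈ Eset β μ e ∨ -x ∈ Eset β μ e)}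

/-- Subnormal numbers (both signs) for minimal exponent `emin`. -/
def SubN (β μ : ℕ) (emin : ℤ) : Set ℝ :=
  {x | ∃ r : ℕ, 1 ≤ r ∧ r < β ^ μ ∧ (x = (β : ℝ) ^ emin * r ∨ x = -((β : ℝ) ^ emin * r))}

/-- IEEE system: MPFR system augmented with subnormal numbers. -/
def IEEEF (β μ : ℕ) (emin : ℤ) : Set ℝ := MPFRF β μ emin ∪ SubN β μ emin

/-- `fl` rounds to nearest in `F`. -/
def RTN (F : Set ℝ) (fl : ℝ → ℝ) : Prop :=
  ∀ z : ℝ, fl z ∈ F ∧ ∀ x ∈ F, |fl z - z| ≤ |x - z|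

/-- Recursively rounded sum: `rsum fl y 0 = y 0`,
`rsum fl y (k+1) = fl (k+1) (rsum fl y k + y (k+1))`. -/
def rsum (fl : ℕ → ℝ → ℝ) (y : ℕ → ℝ) : ℕ → ℝ
  | 0 => y 0
  | k + 1 => fl (k + 1) (rsum fl y k + y (k + 1))

/-- Ties are broken downward. -/
def BreaksTiesDown (F : Set ℝ) (fl : ℝ → ℝ) : Prop :=
  ∀ z : ℝ, ∀ x ∈ F, |x - z| = |fl z - z| → fl z ≤ x

/-- Ties are broken upward. -/
def BreaksTiesUp (F : Set ℝ) (fl : ℝ → ℝ) : Prop :=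
  ∀ z : ℝ, ∀ x ∈ F, |x - z| = |fl z - z| → x ≤ fl z

lemma zero_memF (β μ : ℕ) : (0:ℝ) ∈ PerfectF β μ := Or.inl rfl

lemma neg_memF {β μ : ℕ} {x : ℝ} (hx : x ∈ PerfectF β μ) : -x ∈ PerfectF β μ := by
  rcases hx with h | ⟨e, h | h⟩
  · exact Or.inl (by rw [h, neg_zero])
  · exact Or.inr ⟨e, Or.inr (by simpa using h)⟩
  · exact Or.inr ⟨e, Or.inl (by simpa using h)⟩

lemma pow_memF {β μ : ℕ} (hβ : 2 ≤ β) (E : ℤ) : ((β:ℝ)^E) ∈ PerfectF β μ := by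
  have hb0 : (0:ℝ) < (β:ℝ) := by
    have : 0 < β := by omega
    exact_mod_cast this
  refine Or.inr ⟨E - μ, Or.inl ⟨0, ?_, ?_⟩⟩
  · have h1 : 0 < β - 1 := by omega
    have h2 : 0 < β ^ μ := Nat.pow_pos (by omega)
    exact Nat.mul_pos h1 h2
  · push_cast
    rw [add_zero, ← zpow_natCast (β:ℝ) μ, ← zpow_add₀ (ne_of_gt hb0)]
    ring_nf

lemma Eset_pos {β μ : ℕ} (hβ : 2 ≤ β) {e : ℤ} {x : ℝ} (hx : x ∈ Eset β μ e) : 0 < x := by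
  obtain ⟨r, _, rfl⟩ := hx
  have hb0 : (0:ℝ) < (β:ℝ) := by
    have : 0 < β := by omega
    exact_mod_cast this
  positivity

lemma gridF {β μ : ℕ} (hβ : 2 ≤ β) {z : ℝ} (hz : 0 < z) :
    ∃ g ∈ PerfectF β μ, |g - z| ≤ (β:ℝ) ^ (Int.log β z - (μ:ℤ)) / 2 := by
  have hβ1 : 1 < β := by omega
  have hb0 : (0:ℝ) < (β:ℝ) := by exact_mod_cast (by omega : 0 < β)
  have hb0' : ((β:ℝ)) ≠ 0 := ne_of_gt hb0
  set E : ℤ := Int.log β z with hE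
  set s : ℝ := (β:ℝ) ^ (E - (μ:ℤ)) with hs
  have hs0 : 0 < s := zpow_pos hb0 _
  have hV : (β:ℝ)^E ≤ z := Int.zpow_log_le_self hβ1 hz
  have hV2 : z < (β:ℝ)^(E+1) := Int.lt_zpow_succ_log_self hβ1 z
  set N : ℕ := (β - 1) * β ^ μ with hN
  have hsN : s * N = (β:ℝ)^(E+1) - (β:ℝ)^E := by
    have : ((N:ℝ)) = ((β:ℝ) - 1) * (β:ℝ)^(μ:ℤ) := by
      push_cast [hN]
      rw [Nat.cast_sub (by omega : 1 ≤ β)]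
      push_cast
      rw [← zpow_natCast (β:ℝ) μ]
    rw [this, hs]
    have h1 : (β:ℝ)^(E-(μ:ℤ)) * (β:ℝ)^(μ:ℤ) = (β:ℝ)^E := by
      rw [← zpow_add₀ hb0']; ring_nf
    have h2 : (β:ℝ)^(E+1) = (β:ℝ)^E * β := by
      rw [zpow_add₀ hb0', zpow_one]
    linear_combination ((β:ℝ)-1) * h1 - h2
  set j : ℤ := round ((z - (β:ℝ)^E)/s) with hj
  have hq0 : 0 ≤ (z - (β:ℝ)^E)/s := div_nonneg (by linarith) (le_of_lt hs0)
  have hqN : (z - (β:ℝ)^E)/s < N := by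
    rw [div_lt_iff₀ hs0]
    have : (N:ℝ) * s = s * N := by ring
    rw [this, hsN]; linarith
  have hj0 : 0 ≤ j := by
    rw [hj, round_eq]
    have : (0:ℝ) ≤ (z - (β:ℝ)^E)/s + 1/2 := by linarith
    exact_mod_cast Int.le_floor.2 (by exact_mod_cast this)
  have hjN : j ≤ (N:ℤ) := by
    rw [hj, round_eq]
    have : (z - (β:ℝ)^E)/s + 1/2 < (N:ℝ) + 1 := by linarith
    exact Int.lt_add_one_iff.mp (Int.floor_lt.2 (by exact_mod_cast this))
  refine ⟨(β:ℝ)^E + (j:ℝ) * s, ?_, ?_⟩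
  · rcases eq_or_lt_of_le hjN with heq | hlt
    · have : (β:ℝ)^E + (j:ℝ) * s = (β:ℝ)^(E+1) := by
        rw [heq]; push_cast; linarith [hsN]
      rw [this]; exact pow_memF hβ _
    · refine Or.inr ⟨E - (μ:ℤ), Or.inl ⟨j.toNat, ?_, ?_⟩⟩
      · have : (j.toNat : ℤ) < (N:ℤ) := by rwa [Int.toNat_of_nonneg hj0]
        exact_mod_cast this
      · have hcast : ((j.toNat : ℕ) : ℝ) = (j:ℝ) := by
          exact_mod_cast congrArg (fun t : ℤ => (t:ℝ)) (Int.toNat_of_nonneg hj0)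
        rw [hcast]
        have h1 : (β:ℝ)^(E-(μ:ℤ)) * (β:ℝ)^(μ:ℤ) = (β:ℝ)^E := by
          rw [← zpow_add₀ hb0']; ring_nf
        have hμc : ((β:ℝ))^(μ:ℕ) = (β:ℝ)^(μ:ℤ) := (zpow_natCast _ _).symm
        rw [hμc]
        linear_combination - h1
  · have habs : |(j:ℝ) - (z - (β:ℝ)^E)/s| ≤ 1/2 := by
      rw [hj]
      have := abs_sub_round ((z - (β:ℝ)^E)/s)
      rwa [abs_sub_comm]
    have key : (β:ℝ)^E + (j:ℝ) * s - z = s * ((j:ℝ) - (z - (β:ℝ)^E)/s) := by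
      field_simp
      ring
    rw [key, abs_mul, abs_of_pos hs0]
    have := mul_le_mul_of_nonneg_left habs (le_of_lt hs0)
    calc s * |(j:ℝ) - (z - (β:ℝ)^E)/s| ≤ s * (1/2) := this
      _ = s / 2 := by ring

lemma fl_zero {β μ : ℕ} {fl : ℝ → ℝ} (hfl : RTN (PerfectF β μ) fl) : fl 0 = 0 := by
  have := (hfl 0).2 0 (zero_memF β μ)
  simp only [sub_zero, abs_zero] at this
  exact abs_eq_zero.mp (le_antisymm this (abs_nonneg _))

lemma flerr_key {β μ : ℕ} (hβ : 2 ≤ β) {fl : ℝ → ℝ} (hfl : RTN (PerfectF β μ) fl)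
    {z : ℝ} (hz : z ≠ 0) :
    |fl z - z| ≤ (β:ℝ)^(Int.log β |z| - (μ:ℤ))/2 ∧
      |fl z - z| ≤ |z| - (β:ℝ)^(Int.log β |z|) := by
  have hβ1 : 1 < β := by omega
  have hw : 0 < |z| := abs_pos.mpr hz
  obtain ⟨g, hgF, hg⟩ := gridF (μ := μ) hβ hw
  have hV : (β:ℝ)^(Int.log β |z|) ≤ |z| := Int.zpow_log_le_self hβ1 hw
  set V := (β:ℝ)^(Int.log β |z|) with hVdef
  rcases lt_or_gt_of_ne hz with hneg | hpos
  · have hzz : |z| = -z := abs_of_neg hneg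
    constructor
    · have h1 : -g - z = -(g - |z|) := by rw [hzz]; ring
      calc |fl z - z| ≤ |(-g) - z| := (hfl z).2 _ (neg_memF hgF)
        _ = abs (g - |z|) := by rw [h1, abs_neg]
        _ ≤ _ := hg
    · have h1 : |(-V) - z| = |z| - V := by
        have : -V - z = |z| - V := by rw [hzz]; ring
        rw [this, abs_of_nonneg (by linarith)]
      calc |fl z - z| ≤ |(-V) - z| := (hfl z).2 _ (neg_memF (pow_memF hβ _))
        _ = |z| - V := h1
  · have hzz : |z| = z := abs_of_pos hpos
    constructor
    · calc |fl z - z| ≤ |g - z| := (hfl z).2 _ hgF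
        _ = abs (g - |z|) := by rw [hzz]
        _ ≤ _ := hg
    · calc |fl z - z| ≤ |V - z| := (hfl z).2 _ (pow_memF hβ _)
        _ = |z| - V := by
            have : V - z = -(|z| - V) := by rw [hzz]; ring
            rw [this, abs_neg, abs_of_nonneg (by linarith)]

lemma flerr_rel {β μ : ℕ} (hβ : 2 ≤ β) {u : ℝ} (hu : u = 1 / (2 * (β : ℝ) ^ μ))
    {fl : ℝ → ℝ} (hfl : RTN (PerfectF β μ) fl) (z : ℝ) :
    |fl z - z| ≤ u / (1 + u) * |z| := by
  have hb0 : (0:ℝ) < (β:ℝ) := by exact_mod_cast (by omega : 0 < β)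
  have hu0 : 0 < u := by rw [hu]; positivity
  rcases eq_or_ne z 0 with rfl | hz
  · rw [fl_zero hfl]; simp
  · have hβ1 : 1 < β := by omega
    have hw : 0 < |z| := abs_pos.mpr hz
    set E := Int.log β |z| with hE
    have hV : (β:ℝ)^E ≤ |z| := Int.zpow_log_le_self hβ1 hw
    have hV0 : (0:ℝ) < (β:ℝ)^E := zpow_pos hb0 _
    obtain ⟨k1, k2⟩ := flerr_key hβ hfl hz
    have hus : (β:ℝ)^(E - (μ:ℤ))/2 = u * (β:ℝ)^E := by
      have hbm : (0:ℝ) < (β:ℝ)^(μ:ℕ) := by positivity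
      rw [hu, zpow_sub₀ (ne_of_gt hb0), zpow_natCast]
      field_simp
    rw [hus] at k1
    rcases le_or_gt ((1+u) * (β:ℝ)^E) |z| with hc | hc
    · calc |fl z - z| ≤ u * (β:ℝ)^E := k1
        _ ≤ u / (1+u) * |z| := by
          rw [div_mul_eq_mul_div, le_div_iff₀ (by linarith)]
          nlinarith
    · calc |fl z - z| ≤ |z| - (β:ℝ)^E := k2
        _ ≤ u / (1+u) * |z| := by
          rw [div_mul_eq_mul_div, le_div_iff₀ (by linarith)]
          nlinarith

lemma half_spacing {β μ : ℕ} (hβ : 2 ≤ β) {u : ℝ} (hu : u = 1 / (2 * (β : ℝ) ^ μ))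
    (E : ℤ) : (β:ℝ)^(E - (μ:ℤ))/2 = u * (β:ℝ)^E := by
  have hb0 : (0:ℝ) < (β:ℝ) := by exact_mod_cast (by omega : 0 < β)
  have hbm : (0:ℝ) < (β:ℝ)^(μ:ℕ) := by positivity
  rw [hu, zpow_sub₀ (ne_of_gt hb0), zpow_natCast]
  field_simp


lemma arith_count {q w A e0 B mR nR : ℝ} (hA : A ≤ mR * w / 2) (hA0 : 0 ≤ A)
    (he : e0 ≤ w) (hB : B ≤ (nR - mR - 1) * w) (hw : 0 ≤ w) (hm0 : 0 ≤ mR)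
    (hq0 : 0 ≤ q) (hq : q ≤ 1/20) :
    A + e0 + B + 2*q*A ≤ nR * w := by
  nlinarith [mul_nonneg hm0 hw, mul_le_mul_of_nonneg_left hA (by linarith : (0:ℝ) ≤ 1 + 2*q)]

lemma arith_final {q A e0 B V P : ℝ} (hq0 : 0 ≤ q)
    (hcount : A + e0 + B + 2*q*A ≤ q*V)
    (hPge : V + e0 - A + B ≤ P) :
    (A + e0 + B) * (1 + q) ≤ q * P := by
  nlinarith [mul_le_mul_of_nonneg_left hPge hq0]

lemma sum_bound (β μ n : ℕ) (hβ : 2 ≤ β) (u : ℝ)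
    (hu : u = 1 / (2 * (β : ℝ) ^ μ)) (hnu : 20 * (n : ℝ) * u ≤ 1)
    (fl : ℕ → ℝ → ℝ) (hfl : ∀ k, 1 ≤ k → k ≤ n → RTN (PerfectF β μ) (fl k))
    (p : ℕ → ℝ) (hp : ∀ k, k ≤ n → p k ∈ PerfectF β μ) :
    |rsum fl p n - ∑ k ∈ Finset.range (n+1), p k| ≤
      ((n:ℝ) * u / (1 + (n:ℝ) * u)) * ∑ k ∈ Finset.range (n+1), |p k| := by
  have hβ1 : 1 < β := by omega
  have hb0 : (0:ℝ) < (β:ℝ) := by exact_mod_cast (by omega : 0 < β)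
  have hu0 : 0 < u := by rw [hu]; positivity
  have hnu0 : 0 ≤ (n:ℝ) * u := by positivity
  have hPnn : 0 ≤ ∑ k ∈ Finset.range (n+1), |p k| :=
    Finset.sum_nonneg fun k _ => abs_nonneg _
  set s : ℕ → ℝ := rsum fl p with hs
  set t : ℕ → ℝ := fun k => s k + p (k+1) with ht
  set η : ℕ → ℝ := fun k => s (k+1) - t k with hη
  -- telescoping
  have hTel : ∀ j, s j - ∑ k ∈ Finset.range (j+1), p k = ∑ k ∈ Finset.range j, η k := by
    intro j
    induction j with
    | zero => simp [hs, rsum]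
    | succ j ih =>
      rw [Finset.sum_range_succ (f := η), Finset.sum_range_succ (f := p), ← ih]
      have : η j = s (j+1) - (s j + p (j+1)) := rfl
      rw [this]; ring
  -- s in F
  have hsF : ∀ j, j ≤ n → s j ∈ PerfectF β μ := by
    intro j
    induction j with
    | zero => intro _; exact hp 0 (by omega)
    | succ j ih =>
      intro hj
      have : s (j+1) = fl (j+1) (t j) := rfl
      rw [this]
      exact ((hfl (j+1) (by omega) hj) (t j)).1
  -- per-step bounds
  have hsfl : ∀ k, s (k+1) = fl (k+1) (t k) := fun k => rfl
  have hηp : ∀ k, k < n → |η k| ≤ |p (k+1)| := by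
    intro k hk
    have h := ((hfl (k+1) (by omega) (by omega)) (t k)).2 (s k) (hsF k (by omega))
    have : s k - t k = -(p (k+1)) := by simp [ht]
    calc |η k| = |fl (k+1) (t k) - t k| := by simp only [hη]; rw [hsfl k]
      _ ≤ |s k - t k| := h
      _ = |p (k+1)| := by rw [this, abs_neg]
  have hη0 : ∀ k, k < n → t k = 0 → η k = 0 := by
    intro k hk h0
    have : η k = fl (k+1) (t k) - t k := by simp only [hη]; rw [hsfl k]
    rw [this, h0, fl_zero (hfl (k+1) (by omega) (by omega)), sub_zero]
  have hηkey : ∀ k, k < n → t k ≠ 0 →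
      |η k| ≤ u * (β:ℝ)^(Int.log β |t k|) ∧
      |η k| ≤ |t k| - (β:ℝ)^(Int.log β |t k|) := by
    intro k hk h0
    have h := flerr_key hβ (hfl (k+1) (by omega) (by omega)) h0
    have heq : η k = fl (k+1) (t k) - t k := by simp only [hη]; rw [hsfl k]
    rw [half_spacing hβ hu] at h
    rw [heq]
    exact h
  -- main argument
  set P := ∑ k ∈ Finset.range (n+1), |p k| with hPdef
  have habs : |s n - ∑ k ∈ Finset.range (n+1), p k| ≤ ∑ k ∈ Finset.range n, |η k| := by
    rw [hTel n]; exact Finset.abs_sum_le_sum_abs _ _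
  by_cases hKall : ∀ k, k < n → η k = 0
  · have hz : ∑ k ∈ Finset.range n, |η k| = 0 :=
      Finset.sum_eq_zero fun k hk => by rw [hKall k (Finset.mem_range.mp hk), abs_zero]
    refine le_trans habs ?_
    rw [hz]
    positivity
  · push_neg at hKall
    obtain ⟨k0, hk0n, hk0⟩ := hKall
    set K := (Finset.range n).filter (fun k => η k ≠ 0) with hKdef
    have hKne : K.Nonempty :=
      ⟨k0, Finset.mem_filter.mpr ⟨Finset.mem_range.mpr hk0n, hk0⟩⟩
    set e : ℕ → ℤ := fun k => Int.log β |t k| with he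
    have hKim : (K.image e).Nonempty := hKne.image e
    set M := (K.image e).max' hKim with hM
    obtain ⟨k1, hk1K, hk1e⟩ := Finset.mem_image.mp ((K.image e).max'_mem hKim)
    set Kf := K.filter (fun k => e k = M) with hKf
    have hKfne : Kf.Nonempty := ⟨k1, Finset.mem_filter.mpr ⟨hk1K, hk1e⟩⟩
    set m := Kf.min' hKfne with hm
    have hmKf : m ∈ Kf := Kf.min'_mem hKfne
    have hmK : m ∈ K := (Finset.mem_filter.mp hmKf).1
    have hme : e m = M := (Finset.mem_filter.mp hmKf).2
    have hmn : m < n := Finset.mem_range.mp (Finset.mem_filter.mp hmK).1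
    have hηm : η m ≠ 0 := (Finset.mem_filter.mp hmK).2
    have htm : t m ≠ 0 := fun h => hηm (hη0 m hmn h)
    set V := (β:ℝ)^M with hV
    have hV0 : 0 < V := zpow_pos hb0 _
    have hb1R : (1:ℝ) ≤ (β:ℝ) := by exact_mod_cast hβ1.le
    have hmax : ∀ k, k ∈ K → (β:ℝ)^(e k) ≤ V := fun k hk =>
      zpow_le_zpow_right₀ hb1R (Finset.le_max' _ _ (Finset.mem_image_of_mem e hk))
    -- general bound
    have hgen : ∀ k, k < n → |η k| ≤ u * V := by
      intro k hk
      by_cases h0 : η k = 0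
      · rw [h0, abs_zero]; positivity
      · have hkK : k ∈ K := Finset.mem_filter.mpr ⟨Finset.mem_range.mpr hk, h0⟩
        have htk : t k ≠ 0 := fun h => h0 (hη0 k hk h)
        calc |η k| ≤ u * (β:ℝ)^(e k) := (hηkey k hk htk).1
          _ ≤ u * V := mul_le_mul_of_nonneg_left (hmax k hkK) hu0.le
    -- pre-m bound
    have hpre : ∀ k, k < m → |η k| ≤ u * V / β := by
      intro k hkm
      have hkn : k < n := lt_trans hkm hmn
      by_cases h0 : η k = 0
      · rw [h0, abs_zero]; positivity
      · have hkK : k ∈ K := Finset.mem_filter.mpr ⟨Finset.mem_range.mpr hkn, h0⟩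
        have htk : t k ≠ 0 := fun h => h0 (hη0 k hkn h)
        have hne : e k ≠ M := by
          intro h
          have hkf : k ∈ Kf := Finset.mem_filter.mpr ⟨hkK, h⟩
          have := Kf.min'_le k hkf
          omega
        have hlt : e k ≤ M - 1 := by
          have := Finset.le_max' (K.image e) (e k) (Finset.mem_image_of_mem e hkK)
          omega
        have hpow : (β:ℝ)^(e k) ≤ V / β := by
          have h2 : (β:ℝ)^(M-1) = V / β := by
            rw [hV, zpow_sub₀ (ne_of_gt hb0), zpow_one]
          calc (β:ℝ)^(e k) ≤ (β:ℝ)^(M-1) := zpow_le_zpow_right₀ hb1R hlt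
            _ = V / β := h2
        calc |η k| ≤ u * (β:ℝ)^(e k) := (hηkey k hkn htk).1
          _ ≤ u * (V/β) := mul_le_mul_of_nonneg_left hpow hu0.le
          _ = u * V / β := by ring
    have hm1 : |η m| ≤ u * V := hgen m hmn
    have hVm : (β:ℝ)^(Int.log β |t m|) = V := by
      show (β:ℝ)^(e m) = V
      rw [hme, hV]
    have hm2 : |η m| ≤ |t m| - V := by
      have := (hηkey m hmn htm).2
      rwa [hVm] at this
    -- sums
    set A := ∑ k ∈ Finset.range m, |η k| with hA
    set B := ∑ k ∈ Finset.Ico (m+1) n, |η k| with hB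
    have hAnn : 0 ≤ A := Finset.sum_nonneg fun k _ => abs_nonneg _
    have hBnn : 0 ≤ B := Finset.sum_nonneg fun k _ => abs_nonneg _
    have hηsplit : ∑ k ∈ Finset.range n, |η k| = A + |η m| + B := by
      have h1 : ∑ k ∈ Finset.range n, |η k|
          = (∑ k ∈ Finset.range (m+1), |η k|) + B := by
        rw [hB, Finset.range_eq_Ico,
          ← Finset.sum_Ico_consecutive (fun k => |η k|) (by omega : 0 ≤ m+1) (by omega : m+1 ≤ n), ← Finset.range_eq_Ico]
      rw [h1, Finset.sum_range_succ]
    have hAb : A ≤ (m:ℝ) * (u * V / β) := by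
      have := Finset.sum_le_card_nsmul (Finset.range m) (fun k => |η k|) (u*V/β)
        (fun k hk => hpre k (Finset.mem_range.mp hk))
      simpa [nsmul_eq_mul] using this
    have hBb : B ≤ ((n - (m+1) : ℕ) : ℝ) * (u * V) := by
      have := Finset.sum_le_card_nsmul (Finset.Ico (m+1) n) (fun k => |η k|) (u*V)
        (fun k hk => hgen k (Finset.mem_Ico.mp hk).2)
      simpa [nsmul_eq_mul, Nat.card_Ico] using this
    -- front payment
    have htm_eq : t m = (∑ k ∈ Finset.range (m+2), p k) + ∑ k ∈ Finset.range m, η k := by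
      have h1 := hTel m
      have h2 : t m = s m + p (m+1) := rfl
      rw [h2, Finset.sum_range_succ (f := p) (n := m+1)]
      linarith
    have hfront : V + |η m| ≤ (∑ k ∈ Finset.range (m+2), |p k|) + A := by
      have h1 : |t m| ≤ (∑ k ∈ Finset.range (m+2), |p k|) + A := by
        rw [htm_eq]
        calc |(∑ k ∈ Finset.range (m+2), p k) + ∑ k ∈ Finset.range m, η k|
            ≤ |∑ k ∈ Finset.range (m+2), p k| + |∑ k ∈ Finset.range m, η k| := abs_add_le _ _
          _ ≤ (∑ k ∈ Finset.range (m+2), |p k|) + A :=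
              add_le_add (Finset.abs_sum_le_sum_abs _ _) (Finset.abs_sum_le_sum_abs _ _)
      linarith
    -- back payment
    have hBp : B ≤ ∑ k ∈ Finset.Ico (m+2) (n+1), |p k| := by
      have hshift : ∑ k ∈ Finset.Ico (m+2) (n+1), |p k|
          = ∑ k ∈ Finset.Ico (m+1) n, |p (k+1)| := by
        rw [Finset.sum_Ico_eq_sum_range, Finset.sum_Ico_eq_sum_range]
        have hc : n + 1 - (m+2) = n - (m+1) := by omega
        rw [hc]
        refine Finset.sum_congr rfl (fun i _ => ?_)
        have hix : m + 2 + i = m + 1 + i + 1 := by omega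
        rw [hix]
      rw [hshift, hB]
      exact Finset.sum_le_sum (fun k hk => hηp k (Finset.mem_Ico.mp hk).2)
    have hPsplit : P = (∑ k ∈ Finset.range (m+2), |p k|)
        + ∑ k ∈ Finset.Ico (m+2) (n+1), |p k| := by
      rw [hPdef, Finset.range_eq_Ico,
        ← Finset.sum_Ico_consecutive (fun k => |p k|) (by omega : 0 ≤ m+2) (by omega : m+2 ≤ n+1), ← Finset.range_eq_Ico]
    have hPge : (V + |η m| - A) + B ≤ P := by linarith only [hfront, hBp, hPsplit]
    -- counting bound
    have hq0 : (0:ℝ) ≤ (n:ℝ) * u := hnu0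
    have hq20 : (n:ℝ) * u ≤ 1/20 := by linarith only [hnu]
    have hbge2 : (2:ℝ) ≤ (β:ℝ) := by exact_mod_cast hβ
    have hcard : ((n - (m+1) : ℕ) : ℝ) = (n:ℝ) - (m:ℝ) - 1 := by
      have : m + 1 ≤ n := hmn
      push_cast [Nat.cast_sub this]
      ring
    have hA2 : A ≤ (m:ℝ) * (u * V) / 2 := by
      have hdiv : u * V / (β:ℝ) ≤ u * V / 2 :=
        div_le_div_of_nonneg_left (by positivity) (by norm_num) hbge2
      have hm0 : (0:ℝ) ≤ (m:ℝ) := Nat.cast_nonneg m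
      calc A ≤ (m:ℝ) * (u * V / β) := hAb
        _ ≤ (m:ℝ) * (u * V / 2) := mul_le_mul_of_nonneg_left hdiv hm0
        _ = (m:ℝ) * (u * V) / 2 := by ring
    have hcount : A + |η m| + B + 2*((n:ℝ)*u)*A ≤ ((n:ℝ) * u) * V := by
      have h2 : B ≤ ((n:ℝ) - (m:ℝ) - 1) * (u * V) := by rw [← hcard]; exact hBb
      have := arith_count (q := (n:ℝ)*u) (w := u*V) hA2 hAnn hm1 h2
        (by positivity) (Nat.cast_nonneg m) hq0 hq20
      linarith only [this]
    -- conclude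
    rw [div_mul_eq_mul_div, le_div_iff₀ (by linarith : (0:ℝ) < 1 + (n:ℝ)*u)]
    have hH : |s n - ∑ k ∈ Finset.range (n+1), p k| ≤ A + |η m| + B := by
      rw [← hηsplit]; exact habs
    have hfinal : (A + |η m| + B) * (1 + (n:ℝ)*u) ≤ ((n:ℝ)*u) * P := by
      refine arith_final hq0 hcount ?_
      linarith only [hPge]
    calc |s n - ∑ k ∈ Finset.range (n+1), p k| * (1 + (n:ℝ)*u)
        ≤ (A + |η m| + B) * (1 + (n:ℝ)*u) :=
          mul_le_mul_of_nonneg_right hH (by linarith)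
      _ ≤ ((n:ℝ)*u) * P := hfinal


theorem stmt19 (β μ n : ℕ) (hβ : 2 ≤ β) (hμ : 1 ≤ μ) (hn : 1 ≤ n)
    (u : ℝ) (hu : u = 1 / (2 * (β : ℝ) ^ μ)) (hnu : 20 * (n : ℝ) * u ≤ 1)
    (fl : ℕ → ℝ → ℝ) (hfl : ∀ k, 1 ≤ k → k ≤ n → RTN (PerfectF β μ) (fl k))
    (r : ℕ → ℝ → ℝ) (hr : ∀ k, k ≤ n → RTN (PerfectF β μ) (r k))
    (x y : ℕ → ℝ) :
    |rsum fl (fun k => r k (x k * y k)) n - ∑ k ∈ Finset.range (n + 1), x k * y k| ≤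
      (((n : ℝ) + 1 + 3 * (n : ℝ) * u) / (1 + ((n : ℝ) + 1) * u + (n : ℝ) * u ^ 2)) * u *
        ∑ k ∈ Finset.range (n + 1), |x k * y k| ∧
    (((n : ℝ) + 1 + 3 * (n : ℝ) * u) / (1 + ((n : ℝ) + 1) * u + (n : ℝ) * u ^ 2)) * u *
        ∑ k ∈ Finset.range (n + 1), |x k * y k| ≤
      ((n : ℝ) + 1) * u * ∑ k ∈ Finset.range (n + 1), |x k * y k| := by
  have hb0 : (0:ℝ) < (β:ℝ) := by exact_mod_cast (by omega : 0 < β)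
  have hu0 : 0 < u := by rw [hu]; positivity
  have hq0 : (0:ℝ) ≤ (n:ℝ) * u := by positivity
  set q := (n:ℝ) * u with hq
  set θ := u / (1 + u) with hθ
  have hθ0 : 0 ≤ θ := by rw [hθ]; positivity
  set p : ℕ → ℝ := fun k => r k (x k * y k) with hp
  set T := ∑ k ∈ Finset.range (n + 1), |x k * y k| with hT
  have hTnn : 0 ≤ T := Finset.sum_nonneg fun k _ => abs_nonneg _
  have hpF : ∀ k, k ≤ n → p k ∈ PerfectF β μ := fun k hk => ((hr k hk) (x k * y k)).1
  have hprod : ∀ k, k ≤ n → |p k - x k * y k| ≤ θ * |x k * y k| := by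
    intro k hk
    exact flerr_rel hβ hu (hr k hk) (x k * y k)
  -- sum of products error
  have hPsum : |∑ k ∈ Finset.range (n+1), p k - ∑ k ∈ Finset.range (n+1), x k * y k|
      ≤ θ * T := by
    rw [← Finset.sum_sub_distrib, hT, Finset.mul_sum]
    refine le_trans (Finset.abs_sum_le_sum_abs _ _) (Finset.sum_le_sum fun k hk => ?_)
    exact hprod k (Nat.lt_succ_iff.mp (Finset.mem_range.mp hk))
  have hPT : ∑ k ∈ Finset.range (n+1), |p k| ≤ (1 + θ) * T := by
    rw [hT, Finset.mul_sum]
    refine Finset.sum_le_sum fun k hk => ?_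
    have h1 := hprod k (by exact Nat.lt_succ_iff.mp (Finset.mem_range.mp hk))
    have h2 : |p k| ≤ |x k * y k| + |p k - x k * y k| := by
      calc |p k| = |x k * y k + (p k - x k * y k)| := by ring_nf
        _ ≤ |x k * y k| + |p k - x k * y k| := abs_add_le _ _
    nlinarith [abs_nonneg (x k * y k)]
  have hsum := sum_bound β μ n hβ u hu hnu fl hfl p hpF
  -- combine
  have hchain : |rsum fl p n - ∑ k ∈ Finset.range (n + 1), x k * y k|
      ≤ q/(1+q) * ((1+θ)*T) + θ*T := by
    have h1 : |rsum fl p n - ∑ k ∈ Finset.range (n + 1), x k * y k|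
        ≤ |rsum fl p n - ∑ k ∈ Finset.range (n+1), p k|
          + |∑ k ∈ Finset.range (n+1), p k - ∑ k ∈ Finset.range (n+1), x k * y k| := by
      have := abs_sub_le (rsum fl p n) (∑ k ∈ Finset.range (n+1), p k)
        (∑ k ∈ Finset.range (n+1), x k * y k)
      linarith only [this]
    have h2 : q/(1+q) * (∑ k ∈ Finset.range (n+1), |p k|) ≤ q/(1+q) * ((1+θ)*T) := by
      have : (0:ℝ) ≤ q/(1+q) := by positivity
      exact mul_le_mul_of_nonneg_left hPT this
    linarith only [h1, h2, hsum, hPsum]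
  have hden : 1 + ((n:ℝ) + 1) * u + (n:ℝ) * u^2 = (1+u)*(1+q) := by rw [hq]; ring
  have hden0 : (0:ℝ) < 1 + ((n:ℝ) + 1) * u + (n:ℝ) * u^2 := by
    rw [hden]; positivity
  have hcoef : q/(1+q) * (1+θ) + θ
      = (((n : ℝ) + 1 + 3 * (n : ℝ) * u) / (1 + ((n : ℝ) + 1) * u + (n : ℝ) * u ^ 2)) * u := by
    rw [hθ, hden, hq]
    have h1 : (0:ℝ) < 1 + u := by linarith
    have h2 : (0:ℝ) < 1 + (n:ℝ)*u := by linarith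
    field_simp
    ring
  constructor
  · calc |rsum fl p n - ∑ k ∈ Finset.range (n + 1), x k * y k|
        ≤ q/(1+q) * ((1+θ)*T) + θ*T := hchain
      _ = (q/(1+q) * (1+θ) + θ) * T := by ring
      _ = _ := by rw [hcoef]
  · have hfac : (((n : ℝ) + 1 + 3 * (n : ℝ) * u) / (1 + ((n : ℝ) + 1) * u + (n : ℝ) * u ^ 2)) * u
        ≤ ((n : ℝ) + 1) * u := by
      rw [div_mul_eq_mul_div, div_le_iff₀ hden0]
      have hn1 : (1:ℝ) ≤ (n:ℝ) := by exact_mod_cast hn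
      nlinarith [sq_nonneg (((n:ℝ) - 1) * u), mul_pos hu0 hu0, mul_nonneg (mul_nonneg hq0 hu0.le) hu0.le]
    exact mul_le_mul_of_nonneg_right hfac hTnn
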